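/- Let 1/4 < λ < 1/3, let E be the self-similar set in ℝ² generated by the four similitudes x ↦ λx + a_i with a₁ = (0,0), a₂ = (1−λ, 0), a₃ = ((1−λ)/2, 0), a₄ = ((1−λ)/2, 1−λ), let 0 < p < 1/2, and let μ be the self-similar measure with weights p₁ = p₂ = (1−p)/2 and p₃ = p₄ = p/2. If 𝚓 ∈ {1,2,3,4}^n is a word whose last k symbols all lie in {1,2}, then μ(E_{𝚓|_{n−k}} ∩ X(x, ℓ, α)) ≤ 2^{-k} μ(E_{𝚓|_{n−k}}) for all x ∈ E_𝚓, where ℓ is the y-axis and α = (1−3λ)/10. -/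

import Mathlib

open Set MeasureTheory Metric
open scoped ENNReal

noncomputable section

/-- The translation parts `a₁ = (0,0)`, `a₂ = (1−λ,0)`, `a₃ = ((1−λ)/2, 0)`,
`a₄ = ((1−λ)/2, 1−λ)` of the four generating similitudes. -/
def transPart (lam : ℝ) : Fin 4 → EuclideanSpace ℝ (Fin 2) := fun i =>
  (WithLp.equiv 2 (Fin 2 → ℝ)).symm
    (![![0, 0], ![1 - lam, 0], ![(1 - lam) / 2, 0], ![(1 - lam) / 2, 1 - lam]] i)

/-- The four generating similitudes `x ↦ λx + aᵢ`. -/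
def simMap (lam : ℝ) (i : Fin 4) (x : EuclideanSpace ℝ (Fin 2)) :
    EuclideanSpace ℝ (Fin 2) :=
  lam • x + transPart lam i

/-- The cylinder set `E_𝚓 = f_{j₁}∘⋯∘f_{j_n}(E)` coded by a word `𝚓`. -/
def cylSet (lam : ℝ) (E : Set (EuclideanSpace ℝ (Fin 2))) (w : List (Fin 4)) :
    Set (EuclideanSpace ℝ (Fin 2)) :=
  w.foldr (fun i s => simMap lam i '' s) E

/-- The Bernoulli weights `p₁ = p₂ = (1−p)/2`, `p₃ = p₄ = p/2`. -/
def wt (p : ℝ) : Fin 4 → ℝ≥0∞ := fun i =>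
  (![ENNReal.ofReal ((1 - p) / 2), ENNReal.ofReal ((1 - p) / 2),
     ENNReal.ofReal (p / 2), ENNReal.ofReal (p / 2)]) i

lemma sj_coord_abs_le_norm (v : EuclideanSpace ℝ (Fin 2)) (c : Fin 2) : |v c| ≤ ‖v‖ := by
  rw [EuclideanSpace.norm_eq]
  have h1 : |v c| = Real.sqrt (‖v c‖ ^ 2) := by
    rw [Real.sqrt_sq_eq_abs]; simp
  rw [h1]
  apply Real.sqrt_le_sqrt
  exact Finset.single_le_sum (f := fun i => ‖v i‖ ^ 2) (fun i _ => by positivity) (Finset.mem_univ c)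

lemma sj_norm_le_sqrt2 {z w : EuclideanSpace ℝ (Fin 2)}
    (hz : ∀ c, z c ∈ Icc (0:ℝ) 1) (hw : ∀ c, w c ∈ Icc (0:ℝ) 1) :
    ‖z - w‖ ≤ Real.sqrt 2 := by
  rw [EuclideanSpace.norm_eq]
  apply Real.sqrt_le_sqrt
  rw [Fin.sum_univ_two]
  have h : ∀ c : Fin 2, ‖(z - w) c‖ ^ 2 ≤ 1 := by
    intro c
    have h1 := hz c; have h2 := hw c
    have : (z - w) c = z c - w c := by simp
    rw [this, Real.norm_eq_abs, sq_abs]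
    nlinarith [h1.1, h1.2, h2.1, h2.2]
  linarith [h 0, h 1]

lemma sj_simMap_apply (lam : ℝ) (i : Fin 4) (x : EuclideanSpace ℝ (Fin 2)) (c : Fin 2) :
    simMap lam i x c = lam * x c + transPart lam i c := by
  simp [simMap]

lemma sj_transPart0 (lam : ℝ) :
    transPart lam 0 0 = 0 ∧ transPart lam 1 0 = 1 - lam ∧ transPart lam 2 0 = (1 - lam) / 2
      ∧ transPart lam 3 0 = (1 - lam) / 2 ∧ transPart lam 0 1 = 0 ∧ transPart lam 1 1 = 0
      ∧ transPart lam 2 1 = 0 ∧ transPart lam 3 1 = 1 - lam := by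
  refine ⟨?_, ?_, ?_, ?_, ?_, ?_, ?_, ?_⟩ <;> simp [transPart]

lemma sj_trans_mem {lam : ℝ} (hlam : 1/4 < lam) (hlam' : lam < 1/3) (i : Fin 4) (c : Fin 2) :
    transPart lam i c ∈ Icc (0:ℝ) (1 - lam) := by
  fin_cases i <;> fin_cases c <;> simp [transPart, Set.mem_Icc] <;> first | linarith | (constructor <;> linarith)

lemma sj_maps_into {lam : ℝ} {E : Set (EuclideanSpace ℝ (Fin 2))}
    (hE : E = ⋃ i : Fin 4, simMap lam i '' E) (i : Fin 4) :
    simMap lam i '' E ⊆ E := by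
  conv_rhs => rw [hE]
  exact subset_iUnion (fun j => simMap lam j '' E) i

lemma sj_box {lam : ℝ} (hlam : 1/4 < lam) (hlam' : lam < 1/3)
    {E : Set (EuclideanSpace ℝ (Fin 2))} (hEc : IsCompact E) (hEne : E.Nonempty)
    (hE : E = ⋃ i : Fin 4, simMap lam i '' E) :
    ∀ z ∈ E, ∀ c, z c ∈ Icc (0:ℝ) 1 := by
  intro z hz c
  have hcont : Continuous (fun y : EuclideanSpace ℝ (Fin 2) => y c) :=
    (continuous_apply c).comp (PiLp.continuous_ofLp 2 (fun _ : Fin 2 => ℝ))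
  set S : Set ℝ := (fun y : EuclideanSpace ℝ (Fin 2) => y c) '' E with hS
  have hSc : IsCompact S := hEc.image hcont
  have hSne : S.Nonempty := hEne.image _
  have hbdd : BddAbove S := hSc.bddAbove
  have hbdd' : BddBelow S := hSc.bddBelow
  set M := sSup S
  set m := sInf S
  have hstep : ∀ y ∈ E, lam * m ≤ y c ∧ y c ≤ lam * M + (1 - lam) := by
    intro y hy
    rw [hE] at hy
    obtain ⟨j, u, hu, rfl⟩ := by simpa using hy
    have h1 : u c ≤ M := le_csSup hbdd ⟨u, hu, rfl⟩
    have h2 : m ≤ u c := csInf_le hbdd' ⟨u, hu, rfl⟩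
    have ht := sj_trans_mem hlam hlam' j c
    rw [sj_simMap_apply]
    constructor
    · nlinarith [ht.1]
    · nlinarith [ht.2]
  have hM : M ≤ lam * M + (1 - lam) := by
    apply csSup_le hSne
    rintro r ⟨y, hy, rfl⟩
    exact (hstep y hy).2
  have hm : lam * m ≤ m := by
    apply le_csInf hSne
    rintro r ⟨y, hy, rfl⟩
    exact (hstep y hy).1
  have hM1 : M ≤ 1 := by nlinarith
  have hm0 : 0 ≤ m := by nlinarith
  have h1 : z c ≤ M := le_csSup hbdd ⟨z, hz, rfl⟩
  have h2 : m ≤ z c := csInf_le hbdd' ⟨z, hz, rfl⟩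
  exact ⟨le_trans hm0 h2, le_trans h1 hM1⟩

lemma sj_foldr_affine (lam : ℝ) (hlam : 0 < lam) (u : List (Fin 4)) :
    ∃ b : EuclideanSpace ℝ (Fin 2), ∀ S : Set (EuclideanSpace ℝ (Fin 2)),
      u.foldr (fun i s => simMap lam i '' s) S
        = (fun y => lam ^ u.length • y + b) '' S := by
  induction u with
  | nil =>
    refine ⟨0, fun S => ?_⟩
    simp
  | cons i u ih =>
    obtain ⟨b, hb⟩ := ih
    refine ⟨lam • b + transPart lam i, fun S => ?_⟩
    rw [List.foldr_cons, hb, ← Set.image_comp]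
    apply Set.image_congr'
    intro y
    simp only [Function.comp_apply, simMap, List.length_cons]
    rw [smul_add, smul_smul, ← pow_succ']
    abel

lemma sj_cyl_append (lam : ℝ) (E : Set (EuclideanSpace ℝ (Fin 2))) (u v : List (Fin 4)) :
    cylSet lam E (u ++ v) = u.foldr (fun i s => simMap lam i '' s) (cylSet lam E v) := by
  simp [cylSet, List.foldr_append]

lemma sj_foldr_mono (lam : ℝ) (u : List (Fin 4)) {S T : Set (EuclideanSpace ℝ (Fin 2))}
    (h : S ⊆ T) :
    u.foldr (fun i s => simMap lam i '' s) S ⊆ u.foldr (fun i s => simMap lam i '' s) T := by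
  induction u with
  | nil => exact h
  | cons i u ih => exact Set.image_mono ih

lemma sj_cyl_subset_E {lam : ℝ} {E : Set (EuclideanSpace ℝ (Fin 2))}
    (hE : E = ⋃ i : Fin 4, simMap lam i '' E) (u : List (Fin 4)) :
    cylSet lam E u ⊆ E := by
  induction u with
  | nil => exact subset_rfl
  | cons i u ih =>
    exact (Set.image_mono ih).trans (sj_maps_into hE i)

lemma sj_sqrt2_lt_5 : Real.sqrt 2 < 5 := by
  nlinarith [Real.sq_sqrt (by norm_num : (2:ℝ) ≥ 0).le, Real.sqrt_nonneg 2]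

lemma sj_gap {lam : ℝ} (hlam' : lam < 1/3) {i j : Fin 4} (hi : i = 0 ∨ i = 1) (hj : j ≠ i) :
    (1 - lam)/2 ≤ |transPart lam i 0 - transPart lam j 0| := by
  rcases hi with rfl | rfl <;> fin_cases j <;>
    first
      | (exfalso; exact hj rfl)
      | (simp only [transPart, WithLp.equiv_symm_apply, PiLp.toLp_apply, Matrix.cons_val_zero,
           Matrix.cons_val_one, Matrix.head_cons, Matrix.cons_val_two, Matrix.tail_cons,
           Matrix.cons_val_three, Matrix.cons_val_fin_one, Fin.isValue]
         rw [le_abs]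
         first
           | (left; norm_num; done)
           | (left; norm_num; linarith)
           | (right; norm_num; done)
           | (right; norm_num; linarith))

set_option maxHeartbeats 1000000 in

lemma sj_cone_step {lam : ℝ} (hlam : 1/4 < lam) (hlam' : lam < 1/3)
    {E : Set (EuclideanSpace ℝ (Fin 2))} (hEc : IsCompact E) (hEne : E.Nonempty)
    (hE : E = ⋃ i : Fin 4, simMap lam i '' E)
    {i : Fin 4} (hi : i = 0 ∨ i = 1) (u v : List (Fin 4))
    {x y : EuclideanSpace ℝ (Fin 2)}
    (hx : x ∈ cylSet lam E (u ++ i :: v)) (hy : y ∈ cylSet lam E u)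
    (hcone : |(y - x) 0| < (1 - 3 * lam) / 10 * ‖y - x‖) :
    y ∈ cylSet lam E (u ++ [i]) := by
  have hlam0 : (0:ℝ) < lam := by linarith
  have hbox := sj_box hlam hlam' hEc hEne hE
  obtain ⟨b, hb⟩ := sj_foldr_affine lam hlam0 u
  set s := lam ^ u.length with hs
  have hs0 : (0:ℝ) < s := pow_pos hlam0 _
  -- unpack x
  rw [sj_cyl_append, hb] at hx
  obtain ⟨ww, hww, hxeq⟩ := hx
  have hww' : ww ∈ simMap lam i '' E := by
    have : cylSet lam E (i :: v) ⊆ simMap lam i '' E :=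
      Set.image_mono (sj_cyl_subset_E hE v)
    exact this hww
  -- unpack y
  have hy' : y ∈ (fun y => s • y + b) '' E := by
    have : cylSet lam E u = (fun y => s • y + b) '' E := by
      rw [cylSet, hb E]
    rwa [this] at hy
  obtain ⟨z, hz, hyeq⟩ := hy'
  have hwE : ww ∈ E := sj_maps_into hE i hww'
  -- rescale the cone condition
  have hdiff : y - x = s • (z - ww) := by
    rw [← hyeq, ← hxeq]; rw [smul_sub]; simp only [add_sub_add_right_eq_sub]
  have hnorm : ‖y - x‖ = s * ‖z - ww‖ := by
    rw [hdiff, norm_smul, Real.norm_eq_abs, abs_of_pos hs0]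
  have hcoord : (y - x) 0 = s * (z - ww) 0 := by
    rw [hdiff]; simp
  have hcone' : |(z - ww) 0| < (1 - 3 * lam) / 10 * ‖z - ww‖ := by
    rw [hcoord, hnorm, abs_mul, abs_of_pos hs0] at hcone
    have := hcone
    rw [mul_comm ((1 - 3*lam)/10) (s * ‖z - ww‖)] at this
    nlinarith
  -- the norm is at most √2
  have hnle : ‖z - ww‖ ≤ Real.sqrt 2 :=
    sj_norm_le_sqrt2 (hbox z hz) (hbox ww hwE)
  have halpha : (0:ℝ) < (1 - 3 * lam) / 10 := by linarith
  have hsmall : |(z - ww) 0| < (1 - 3 * lam) / 2 := by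
    have h2 : (1 - 3 * lam) / 10 * ‖z - ww‖ ≤ (1 - 3*lam)/10 * Real.sqrt 2 := by
      apply mul_le_mul_of_nonneg_left hnle halpha.le
    have h3 : (1 - 3*lam)/10 * Real.sqrt 2 < (1 - 3*lam)/2 := by
      nlinarith [sj_sqrt2_lt_5, Real.sqrt_nonneg 2]
    linarith
  -- z must be in the i-th piece
  have hz' : z ∈ simMap lam i '' E := by
    have hzE := hz
    rw [hE] at hzE
    obtain ⟨j, zu, hzu, hzeq⟩ := by simpa using hzE
    by_cases hji : j = i
    · exact ⟨zu, hzu, by rw [← hji, hzeq]⟩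
    · exfalso
      obtain ⟨wu, hwu, hweq⟩ := hww'
      have hz0 : z 0 = lam * zu 0 + transPart lam j 0 := by
        rw [← hzeq, sj_simMap_apply]
      have hw0 : ww 0 = lam * wu 0 + transPart lam i 0 := by
        rw [← hweq, sj_simMap_apply]
      have hzu0 := (hbox zu hzu 0)
      have hwu0 := (hbox wu hwu 0)
      have habs : |z 0 - ww 0| < (1 - 3*lam)/2 := by
        have h0 : (z - ww) 0 = z 0 - ww 0 := by simp
        rwa [h0] at hsmall
      rw [abs_lt] at habs
      have hgap := sj_gap hlam' hi hji
      rw [le_abs] at hgap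
      have b1 : lam * zu 0 ≤ lam := by nlinarith [hzu0.2]
      have b2 : 0 ≤ lam * zu 0 := mul_nonneg hlam0.le hzu0.1
      have b3 : lam * wu 0 ≤ lam := by nlinarith [hwu0.2]
      have b4 : 0 ≤ lam * wu 0 := mul_nonneg hlam0.le hwu0.1
      rcases hgap with hgap | hgap <;> linarith [habs.1, habs.2]
  -- conclude
  rw [sj_cyl_append, hb]
  refine ⟨z, ?_, hyeq⟩
  simpa [cylSet] using hz'

lemma sj_cone_chain {lam : ℝ} (hlam : 1/4 < lam) (hlam' : lam < 1/3)
    {E : Set (EuclideanSpace ℝ (Fin 2))} (hEc : IsCompact E) (hEne : E.Nonempty)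
    (hE : E = ⋃ i : Fin 4, simMap lam i '' E) :
    ∀ (v u : List (Fin 4)) (x y : EuclideanSpace ℝ (Fin 2)),
      (∀ s ∈ v, s = 0 ∨ s = 1) → x ∈ cylSet lam E (u ++ v) → y ∈ cylSet lam E u →
      |(y - x) 0| < (1 - 3 * lam) / 10 * ‖y - x‖ → y ∈ cylSet lam E (u ++ v) := by
  intro v
  induction v with
  | nil => intro u x y _ _ hy _; simpa using hy
  | cons i v ih =>
    intro u x y hall hx hy hcone
    have hi : i = 0 ∨ i = 1 := hall i (by simp)
    have hstep : y ∈ cylSet lam E (u ++ [i]) :=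
      sj_cone_step hlam hlam' hEc hEne hE hi u v hx hy hcone
    have hx' : x ∈ cylSet lam E ((u ++ [i]) ++ v) := by
      rwa [List.append_assoc, List.singleton_append]
    have hall' : ∀ s ∈ v, s = 0 ∨ s = 1 := fun s hs => hall s (by simp [hs])
    have := ih (u ++ [i]) x y hall' hx' hstep hcone
    rwa [List.append_assoc, List.singleton_append] at this

lemma sj_wt_sum {p : ℝ} (hp : 0 < p) (hp' : p < 1/2) : ∑ i : Fin 4, wt p i = 1 := by
  rw [Fin.sum_univ_four]
  show ENNReal.ofReal ((1-p)/2) + ENNReal.ofReal ((1-p)/2) + ENNReal.ofReal (p/2)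
      + ENNReal.ofReal (p/2) = 1
  rw [← ENNReal.ofReal_add (by linarith) (by linarith),
      ← ENNReal.ofReal_add (by linarith) (by linarith),
      ← ENNReal.ofReal_add (by linarith) (by linarith)]
  rw [show ((1:ℝ)-p)/2 + (1-p)/2 + p/2 + p/2 = 1 by ring]
  exact ENNReal.ofReal_one

lemma sj_simMap_cont (lam : ℝ) (i : Fin 4) : Continuous (simMap lam i) := by
  unfold simMap
  exact (continuous_id.const_smul lam).add continuous_const

lemma sj_dist_simMap {lam : ℝ} (hlam0 : 0 < lam) (i : Fin 4)
    (z e : EuclideanSpace ℝ (Fin 2)) :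
    dist (simMap lam i z) (simMap lam i e) = lam * dist z e := by
  rw [dist_eq_norm, dist_eq_norm]
  have : simMap lam i z - simMap lam i e = lam • (z - e) := by
    simp only [simMap, smul_sub]; abel
  rw [this, norm_smul, Real.norm_eq_abs, abs_of_pos hlam0]

lemma sj_apply_decomp {lam p : ℝ} {μ : Measure (EuclideanSpace ℝ (Fin 2))}
    (hμ : μ = ∑ i : Fin 4, wt p i • Measure.map (simMap lam i) μ)
    {T : Set (EuclideanSpace ℝ (Fin 2))} (hT : MeasurableSet T) :
    μ T = ∑ i : Fin 4, wt p i * μ (simMap lam i ⁻¹' T) := by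
  conv_lhs => rw [hμ]
  rw [Measure.finset_sum_apply]
  refine Finset.sum_congr rfl fun i _ => ?_
  rw [Measure.smul_apply, smul_eq_mul,
    Measure.map_apply (sj_simMap_cont lam i).measurable hT]

lemma sj_infDist_step {lam : ℝ} (hlam0 : 0 < lam)
    {E : Set (EuclideanSpace ℝ (Fin 2))} (hEne : E.Nonempty)
    (hE : E = ⋃ i : Fin 4, simMap lam i '' E)
    (j : Fin 4) (z : EuclideanSpace ℝ (Fin 2)) {r : ℝ} (hz : infDist z E ≤ r) :
    infDist (simMap lam j z) E ≤ lam * r := by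
  have key : ∀ ε > (0:ℝ), infDist (simMap lam j z) E ≤ lam * r + ε := by
    intro ε hε
    obtain ⟨e, he, hde⟩ := (infDist_lt_iff hEne).mp
      (lt_of_le_of_lt hz (lt_add_of_pos_right r (div_pos hε hlam0)))
    have h1 : infDist (simMap lam j z) E ≤ dist (simMap lam j z) (simMap lam j e) :=
      infDist_le_dist_of_mem (sj_maps_into hE j ⟨e, he, rfl⟩)
    rw [sj_dist_simMap hlam0] at h1
    have : lam * dist z e ≤ lam * (r + ε / lam) :=
      mul_le_mul_of_nonneg_left hde.le hlam0.le
    rw [mul_add, mul_div_cancel₀ _ hlam0.ne'] at this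
    linarith
  exact le_of_forall_pos_le_add key

lemma sj_thick_measure {lam : ℝ} (hlam : 1/4 < lam) (hlam' : lam < 1/3)
    {E : Set (EuclideanSpace ℝ (Fin 2))} (hEne : E.Nonempty)
    (hE : E = ⋃ i : Fin 4, simMap lam i '' E)
    {p : ℝ} (hp : 0 < p) (hp' : p < 1/2)
    {μ : Measure (EuclideanSpace ℝ (Fin 2))} (hprob : IsProbabilityMeasure μ)
    (hμ : μ = ∑ i : Fin 4, wt p i • Measure.map (simMap lam i) μ)
    {δ : ℝ} (hδ : 0 < δ) : μ (thickening δ E) = 1 := by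
  have hlam0 : (0:ℝ) < lam := by linarith
  -- one step
  have hstep : ∀ a : ℝ, μ (thickening (a / lam) E) ≤ μ (thickening a E) := by
    intro a
    have hsub : ∀ j : Fin 4, thickening (a / lam) E ⊆ simMap lam j ⁻¹' thickening a E := by
      intro j z hz
      rw [mem_thickening_iff_infDist_lt hEne] at hz
      rw [mem_preimage, mem_thickening_iff_infDist_lt hEne]
      have h1 := sj_infDist_step hlam0 hEne hE j z (le_refl (infDist z E))
      have h2 : lam * infDist z E < lam * (a / lam) :=
        mul_lt_mul_of_pos_left hz hlam0
      rw [mul_div_cancel₀ _ hlam0.ne'] at h2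
      linarith
    calc μ (thickening (a / lam) E)
        = (∑ i : Fin 4, wt p i) * μ (thickening (a / lam) E) := by
          rw [sj_wt_sum hp hp', one_mul]
      _ = ∑ i : Fin 4, wt p i * μ (thickening (a / lam) E) := by
          rw [Finset.sum_mul]
      _ ≤ ∑ i : Fin 4, wt p i * μ (simMap lam i ⁻¹' thickening a E) :=
          Finset.sum_le_sum fun i _ => mul_le_mul_right (measure_mono (hsub i)) _
      _ = μ (thickening a E) :=
          (sj_apply_decomp hμ isOpen_thickening.measurableSet).symm
  -- iterate
  have hiter : ∀ n : ℕ, μ (thickening (δ / lam ^ n) E) ≤ μ (thickening δ E) := by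
    intro n
    induction n with
    | zero => simp
    | succ n ih =>
      have h1 : δ / lam ^ (n+1) = (δ / lam ^ n) / lam := by
        rw [div_div, pow_succ]
      rw [h1]
      exact le_trans (hstep (δ / lam ^ n)) ih
  -- balls exhaust the space
  obtain ⟨e₀, he₀⟩ := hEne
  have hball : ∀ n : ℕ, μ (ball e₀ (δ / lam ^ n)) ≤ μ (thickening δ E) := by
    intro n
    refine le_trans (measure_mono fun z hz => ?_) (hiter n)
    rw [mem_thickening_iff_infDist_lt ⟨e₀, he₀⟩]
    exact lt_of_le_of_lt (infDist_le_dist_of_mem he₀) (mem_ball.mp hz)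
  have huniv : (⋃ n : ℕ, ball e₀ (δ / lam ^ n)) = univ := by
    ext y
    simp only [mem_iUnion, mem_univ, iff_true, mem_ball]
    obtain ⟨n, hn⟩ := exists_pow_lt_of_lt_one
      (show (0:ℝ) < δ / (dist y e₀ + 1) by positivity) (by linarith : lam < 1)
    refine ⟨n, ?_⟩
    rw [lt_div_iff₀ (by positivity)]
    have hd : 0 ≤ dist y e₀ := dist_nonneg
    calc dist y e₀ * lam ^ n ≤ (dist y e₀ + 1) * lam ^ n := by nlinarith [pow_pos hlam0 n]
      _ < (dist y e₀ + 1) * (δ / (dist y e₀ + 1)) := by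
          exact mul_lt_mul_of_pos_left hn (by positivity)
      _ = δ := by field_simp
  have hmono : Monotone (fun n : ℕ => ball e₀ (δ / lam ^ n)) := by
    intro n m hnm
    apply ball_subset_ball
    apply div_le_div_of_nonneg_left hδ.le (by positivity)
    exact pow_le_pow_of_le_one hlam0.le (by linarith) hnm
  have h1 : μ univ ≤ μ (thickening δ E) := by
    rw [← huniv, hmono.measure_iUnion]
    exact iSup_le hball
  rw [measure_univ] at h1
  exact le_antisymm prob_le_one h1

lemma sj_E_measure {lam : ℝ} (hlam : 1/4 < lam) (hlam' : lam < 1/3)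
    {E : Set (EuclideanSpace ℝ (Fin 2))} (hEc : IsCompact E) (hEne : E.Nonempty)
    (hE : E = ⋃ i : Fin 4, simMap lam i '' E)
    {p : ℝ} (hp : 0 < p) (hp' : p < 1/2)
    {μ : Measure (EuclideanSpace ℝ (Fin 2))} (hprob : IsProbabilityMeasure μ)
    (hμ : μ = ∑ i : Fin 4, wt p i • Measure.map (simMap lam i) μ) :
    μ E = 1 ∧ μ Eᶜ = 0 := by
  have hEeq : E = ⋂ n : ℕ, thickening (1 / (n + 1) : ℝ) E := by
    have hcl : closure E = E := hEc.isClosed.closure_eq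
    have h := closure_eq_iInter_thickening' E (range (fun n : ℕ => (1 / (n + 1) : ℝ)))
      (by rintro r ⟨n, rfl⟩; exact mem_Ioi.mpr (by positivity))
      (by
        intro ε hε
        obtain ⟨n, hn⟩ := exists_nat_one_div_lt hε
        exact ⟨1 / (n + 1), ⟨n, rfl⟩, mem_Ioc.mpr ⟨by positivity, hn.le⟩⟩)
    rw [hcl] at h
    exact h.trans biInter_range
  have hTn : ∀ n : ℕ, μ (thickening (1 / (n + 1) : ℝ) E)ᶜ = 0 := by
    intro n
    rw [measure_compl isOpen_thickening.measurableSet (measure_ne_top μ _),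
      sj_thick_measure hlam hlam' hEne hE hp hp' hprob hμ (by positivity), measure_univ,
      tsub_self]
  have hcompl : μ Eᶜ = 0 := by
    have heq : Eᶜ = ⋃ n : ℕ, (thickening (1 / (n + 1) : ℝ) E)ᶜ := by
      conv_lhs => rw [hEeq, compl_iInter]
    rw [heq]
    refine le_antisymm (le_trans (measure_iUnion_le _) ?_) zero_le
    exact le_of_eq ((tsum_congr hTn).trans tsum_zero)
  refine ⟨?_, hcompl⟩
  have hle := measure_union_le (μ := μ) E Eᶜ
  rw [union_compl_self, measure_univ, hcompl, add_zero] at hle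
  exact le_antisymm prob_le_one hle

lemma sj_gap2 {lam : ℝ} (hlam' : lam < 1/3) {i j : Fin 4} (hij : j ≠ i) :
    ∃ c : Fin 2, (1 - lam)/2 ≤ |transPart lam i c - transPart lam j c| := by
  fin_cases i <;> fin_cases j <;>
    first
      | (exfalso; exact hij rfl)
      | (refine ⟨0, ?_⟩
         simp only [transPart, WithLp.equiv_symm_apply, PiLp.toLp_apply, Matrix.cons_val_zero,
           Matrix.cons_val_one, Matrix.head_cons, Matrix.cons_val_two, Matrix.tail_cons,
           Matrix.cons_val_three, Matrix.cons_val_fin_one, Fin.isValue]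
         rw [le_abs]
         first
           | (left; norm_num; done)
           | (left; norm_num; linarith)
           | (right; norm_num; done)
           | (right; norm_num; linarith))
      | (refine ⟨1, ?_⟩
         simp only [transPart, WithLp.equiv_symm_apply, PiLp.toLp_apply, Matrix.cons_val_zero,
           Matrix.cons_val_one, Matrix.head_cons, Matrix.cons_val_two, Matrix.tail_cons,
           Matrix.cons_val_three, Matrix.cons_val_fin_one, Fin.isValue]
         rw [le_abs]
         first
           | (left; norm_num; done)
           | (left; norm_num; linarith)
           | (right; norm_num; done)
           | (right; norm_num; linarith))

lemma sj_simMap_inj {lam : ℝ} (hlam0 : 0 < lam) (i : Fin 4) :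
    Function.Injective (simMap lam i) := by
  intro a b hab
  have : lam • a = lam • b := by
    have := hab
    unfold simMap at this
    exact add_right_cancel this
  exact smul_right_injective _ hlam0.ne' this

lemma sj_image_measure {lam : ℝ} (hlam : 1/4 < lam) (hlam' : lam < 1/3)
    {E : Set (EuclideanSpace ℝ (Fin 2))} (hEc : IsCompact E) (hEne : E.Nonempty)
    (hE : E = ⋃ i : Fin 4, simMap lam i '' E)
    {p : ℝ} (hp : 0 < p) (hp' : p < 1/2)
    {μ : Measure (EuclideanSpace ℝ (Fin 2))} (hprob : IsProbabilityMeasure μ)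
    (hμ : μ = ∑ i : Fin 4, wt p i • Measure.map (simMap lam i) μ)
    {A : Set (EuclideanSpace ℝ (Fin 2))} (hAc : IsCompact A) (hAE : A ⊆ E) (i : Fin 4) :
    μ (simMap lam i '' A) = wt p i * μ A := by
  have hlam0 : (0:ℝ) < lam := by linarith
  have hbox := sj_box hlam hlam' hEc hEne hE
  have hApre : MeasurableSet (simMap lam i '' A) :=
    (hAc.image (sj_simMap_cont lam i)).measurableSet
  have hnull := (sj_E_measure hlam hlam' hEc hEne hE hp hp' hprob hμ).2
  rw [sj_apply_decomp hμ hApre]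
  have hzero : ∀ j : Fin 4, j ≠ i → wt p j * μ (simMap lam j ⁻¹' (simMap lam i '' A)) = 0 := by
    intro j hji
    have hsub : simMap lam j ⁻¹' (simMap lam i '' A) ⊆ Eᶜ := by
      intro z hz
      obtain ⟨a, haA, haz⟩ := hz
      intro hzE
      obtain ⟨c, hc⟩ := sj_gap2 hlam' hji
      have h1 : lam * z c + transPart lam j c = lam * a c + transPart lam i c := by
        have := congrArg (fun y : EuclideanSpace ℝ (Fin 2) => y c) haz
        simpa [sj_simMap_apply] using this.symm
      have hzc := hbox z hzE c
      have hac := hbox a (hAE haA) c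
      rw [le_abs] at hc
      have b1 : lam * z c ≤ lam := by nlinarith [hzc.2]
      have b2 : 0 ≤ lam * z c := mul_nonneg hlam0.le hzc.1
      have b3 : lam * a c ≤ lam := by nlinarith [hac.2]
      have b4 : 0 ≤ lam * a c := mul_nonneg hlam0.le hac.1
      rcases hc with hc | hc <;> nlinarith
    have : μ (simMap lam j ⁻¹' (simMap lam i '' A)) = 0 :=
      le_antisymm (le_trans (measure_mono hsub) (le_of_eq hnull)) zero_le
    rw [this, mul_zero]
  rw [Finset.sum_eq_single i (fun j _ hji => hzero j hji) (by simp)]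
  rw [Set.preimage_image_eq A (sj_simMap_inj hlam0 i)]

lemma sj_cyl_compact {lam : ℝ} {E : Set (EuclideanSpace ℝ (Fin 2))} (hEc : IsCompact E)
    (u : List (Fin 4)) : IsCompact (cylSet lam E u) := by
  induction u with
  | nil => exact hEc
  | cons i u ih => exact ih.image (sj_simMap_cont lam i)

lemma sj_cyl_measure {lam : ℝ} (hlam : 1/4 < lam) (hlam' : lam < 1/3)
    {E : Set (EuclideanSpace ℝ (Fin 2))} (hEc : IsCompact E) (hEne : E.Nonempty)
    (hE : E = ⋃ i : Fin 4, simMap lam i '' E)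
    {p : ℝ} (hp : 0 < p) (hp' : p < 1/2)
    {μ : Measure (EuclideanSpace ℝ (Fin 2))} (hprob : IsProbabilityMeasure μ)
    (hμ : μ = ∑ i : Fin 4, wt p i • Measure.map (simMap lam i) μ)
    (u : List (Fin 4)) :
    μ (cylSet lam E u) = (u.map (wt p)).prod := by
  induction u with
  | nil =>
    simpa [cylSet] using (sj_E_measure hlam hlam' hEc hEne hE hp hp' hprob hμ).1
  | cons i u ih =>
    have h1 : cylSet lam E (i :: u) = simMap lam i '' cylSet lam E u := rfl
    rw [h1, sj_image_measure hlam hlam' hEc hEne hE hp hp' hprob hμ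
      (sj_cyl_compact hEc u) (sj_cyl_subset_E hE u) i, ih]
    simp [List.map_cons]

lemma sj_coord_le_infDist (v : EuclideanSpace ℝ (Fin 2)) :
    |v 0| ≤ infDist v {z : EuclideanSpace ℝ (Fin 2) | z 0 = 0} := by
  by_contra h
  push_neg at h
  have hne : Set.Nonempty {z : EuclideanSpace ℝ (Fin 2) | z 0 = 0} := ⟨0, by simp⟩
  obtain ⟨z, hz, hdz⟩ := (infDist_lt_iff hne).mp h
  have h1 : |(v - z) 0| ≤ dist v z := by
    rw [dist_eq_norm]
    exact sj_coord_abs_le_norm (v - z) 0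
  have h2 : (v - z) 0 = v 0 := by
    have : (v - z) 0 = v 0 - z 0 := by simp
    rw [this, hz, sub_zero]
  rw [h2] at h1
  linarith

lemma sj_wt_le_half {p : ℝ} (hp : 0 < p) (hp' : p < 1/2) {s : Fin 4}
    (hs : s = 0 ∨ s = 1) : wt p s ≤ (2:ℝ≥0∞)⁻¹ := by
  have h2 : ENNReal.ofReal ((1 - p)/2) ≤ (2:ℝ≥0∞)⁻¹ := by
    have : ENNReal.ofReal ((2:ℝ)⁻¹) = (2:ℝ≥0∞)⁻¹ := by
      rw [ENNReal.ofReal_inv_of_pos (by norm_num)]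
      norm_num
    rw [← this]
    exact ENNReal.ofReal_le_ofReal (by linarith)
  rcases hs with rfl | rfl <;> exact h2

lemma sj_prod_le {p : ℝ} (hp : 0 < p) (hp' : p < 1/2) :
    ∀ l : List (Fin 4), (∀ s ∈ l, s = 0 ∨ s = 1) →
      (l.map (wt p)).prod ≤ ((2:ℝ≥0∞)⁻¹) ^ l.length := by
  intro l
  induction l with
  | nil => simp
  | cons i l ih =>
    intro hall
    rw [List.map_cons, List.prod_cons, List.length_cons, pow_succ']
    exact mul_le_mul' (sj_wt_le_half hp hp' (hall i (by simp)))
      (ih fun s hs => hall s (by simp [hs]))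

/-- Proposition: let `1/4 < λ < 1/3`, let `E ⊆ ℝ²` be the self-similar set of the
four similitudes `x ↦ λx + aᵢ`, let `0 < p < 1/2` and `μ` the self-similar measure
with weights `((1−p)/2, (1−p)/2, p/2, p/2)`. If the last `k` symbols of the word `𝚓`
all lie in `{1,2}`, then `μ(E_{𝚓|_{n−k}} ∩ X(x,ℓ,α)) ≤ 2^{-k} μ(E_{𝚓|_{n−k}})` for
all `x ∈ E_𝚓`, where `ℓ` is the `y`-axis and `α = (1−3λ)/10`. -/
theorem stmt_19 (lam : ℝ) (hlam : 1 / 4 < lam) (hlam' : lam < 1 / 3)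
    (E : Set (EuclideanSpace ℝ (Fin 2))) (hEc : IsCompact E) (hEne : E.Nonempty)
    (hE : E = ⋃ i : Fin 4, simMap lam i '' E)
    (p : ℝ) (hp : 0 < p) (hp' : p < 1 / 2)
    (μ : Measure (EuclideanSpace ℝ (Fin 2))) (hprob : IsProbabilityMeasure μ)
    (hμ : μ = ∑ i : Fin 4, wt p i • Measure.map (simMap lam i) μ)
    (w : List (Fin 4)) (k : ℕ) (hk : k ≤ w.length)
    (hlast : ∀ s ∈ w.drop (w.length - k), s = 0 ∨ s = 1) :
    ∀ x ∈ cylSet lam E w,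
      μ (cylSet lam E (w.take (w.length - k)) ∩
          {y | infDist (y - x) {z : EuclideanSpace ℝ (Fin 2) | z 0 = 0}
            < (1 - 3 * lam) / 10 * ‖y - x‖})
        ≤ ((2:ℝ≥0∞)⁻¹) ^ k * μ (cylSet lam E (w.take (w.length - k))) := by
  intro x hx
  set m := w.length - k with hm
  have hw : w.take m ++ w.drop m = w := List.take_append_drop m w
  have hlen : (w.drop m).length = k := by
    rw [List.length_drop]; omega
  have hsub : cylSet lam E (w.take m) ∩
      {y | infDist (y - x) {z : EuclideanSpace ℝ (Fin 2) | z 0 = 0}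
        < (1 - 3 * lam) / 10 * ‖y - x‖} ⊆ cylSet lam E w := by
    rintro y ⟨hy1, hy2⟩
    have hcone : |(y - x) 0| < (1 - 3 * lam) / 10 * ‖y - x‖ :=
      lt_of_le_of_lt (sj_coord_le_infDist (y - x)) hy2
    have hx' : x ∈ cylSet lam E (w.take m ++ w.drop m) := by rw [hw]; exact hx
    have hres := sj_cone_chain hlam hlam' hEc hEne hE (w.drop m) (w.take m) x y
      hlast hx' hy1 hcone
    rwa [hw] at hres
  calc μ (cylSet lam E (w.take m) ∩
      {y | infDist (y - x) {z : EuclideanSpace ℝ (Fin 2) | z 0 = 0}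
        < (1 - 3 * lam) / 10 * ‖y - x‖})
      ≤ μ (cylSet lam E w) := measure_mono hsub
    _ = (w.map (wt p)).prod :=
        sj_cyl_measure hlam hlam' hEc hEne hE hp hp' hprob hμ w
    _ = ((w.take m).map (wt p)).prod * ((w.drop m).map (wt p)).prod := by
        conv_lhs => rw [← hw]
        rw [List.map_append, List.prod_append]
    _ ≤ ((w.take m).map (wt p)).prod * ((2:ℝ≥0∞)⁻¹) ^ k := by
        refine mul_le_mul_right ?_ _
        rw [← hlen]
        exact sj_prod_le hp hp' _ hlast
    _ = ((2:ℝ≥0∞)⁻¹) ^ k * μ (cylSet lam E (w.take m)) := by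
        rw [sj_cyl_measure hlam hlam' hEc hEne hE hp hp' hprob hμ (w.take m), mul_comm]

end
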